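/- For every ε ∈ (0, 1/4) there exists a constant C > 0 such that for all α ∈ (0, 1] and all ψ ∈ [0, 3π/4]: Σ_{n=1}^∞ e^{−4(1−ε)π²n²/α} · cosh(4πnψ/α) ≤ C·√α. -/

import Mathlib

open Real

/-- Uniform bound on the theta-like tail series: for every `ε ∈ (0, 1/4)` there is
`C > 0` such that for all `α ∈ (0,1]` and `ψ ∈ [0, 3π/4]`,
`Σ_{n≥1} e^{-4(1-ε)π²n²/α} cosh(4πnψ/α) ≤ C√α`. -/
theorem stmt9 (ε : ℝ) (hε : ε ∈ Set.Ioo (0 : ℝ) (1 / 4)) :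
    ∃ C > (0 : ℝ), ∀ α ∈ Set.Ioc (0 : ℝ) 1, ∀ ψ ∈ Set.Icc (0 : ℝ) (3 * π / 4),
      ∑' n : ℕ, Real.exp (-4 * (1 - ε) * π ^ 2 * ((n : ℝ) + 1) ^ 2 / α) *
          Real.cosh (4 * π * ((n : ℝ) + 1) * ψ / α) ≤
        C * Real.sqrt α := by
  obtain ⟨hε0, hε4⟩ := hε
  have hπ := Real.pi_pos
  set δ : ℝ := (4 * (1 - ε) - 3) * π ^ 2 with hδdef
  have hδ : 0 < δ := by
    apply mul_pos
    · linarith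
    · positivity
  have hed : Real.exp (-δ) < 1 := by
    rw [Real.exp_lt_one_iff]; linarith
  have hed0 : 0 < 1 - Real.exp (-δ) := by linarith
  refine ⟨1 / (δ * (1 - Real.exp (-δ))), by positivity, ?_⟩
  rintro α ⟨hα0, hα1⟩ ψ ⟨hψ0, hψ⟩
  set r : ℝ := Real.exp (-δ / α) with hrdef
  have hr0 : 0 < r := Real.exp_pos _
  have hrle : r ≤ Real.exp (-δ) := by
    apply Real.exp_le_exp.2
    rw [div_le_iff₀ hα0]
    nlinarith
  have hr1 : r < 1 := hrle.trans_lt hed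
  -- termwise bound
  have hterm : ∀ n : ℕ,
      Real.exp (-4 * (1 - ε) * π ^ 2 * ((n : ℝ) + 1) ^ 2 / α) *
        Real.cosh (4 * π * ((n : ℝ) + 1) * ψ / α) ≤ r ^ (n + 1) := by
    intro n
    set m : ℝ := (n : ℝ) + 1 with hm
    have hm1 : (1 : ℝ) ≤ m := by
      rw [hm]; have := Nat.cast_nonneg (α := ℝ) n; linarith
    have hB0 : 0 ≤ 4 * π * m * ψ / α := by positivity
    have hcosh : Real.cosh (4 * π * m * ψ / α) ≤ Real.exp (4 * π * m * ψ / α) := by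
      rw [Real.cosh_eq]
      have h2 := Real.exp_le_exp.2 (neg_le_self hB0)
      linarith
    calc Real.exp (-4 * (1 - ε) * π ^ 2 * m ^ 2 / α) * Real.cosh (4 * π * m * ψ / α)
        ≤ Real.exp (-4 * (1 - ε) * π ^ 2 * m ^ 2 / α) * Real.exp (4 * π * m * ψ / α) := by
          apply mul_le_mul_of_nonneg_left hcosh (Real.exp_pos _).le
      _ = Real.exp (-4 * (1 - ε) * π ^ 2 * m ^ 2 / α + 4 * π * m * ψ / α) := by
          rw [← Real.exp_add]
      _ ≤ Real.exp (-(δ * m) / α) := by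
          apply Real.exp_le_exp.2
          rw [← add_div, div_le_div_iff₀ hα0 hα0]
          have hψπ : 4 * π * ψ ≤ 3 * π ^ 2 := by nlinarith
          have h1 : 4 * π * m * ψ ≤ 3 * π ^ 2 * m := by nlinarith
          have hP : 0 ≤ 4 * (1 - ε) * π ^ 2 * m * (m - 1) := by
            apply mul_nonneg
            apply mul_nonneg (mul_nonneg (by linarith : (0:ℝ) ≤ 4 * (1 - ε)) (sq_nonneg π)) (by linarith)
            linarith
          have key : -4 * (1 - ε) * π ^ 2 * m ^ 2 + 4 * π * m * ψ ≤ -(δ * m) := by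
            rw [hδdef]; nlinarith
          nlinarith [mul_le_mul_of_nonneg_right key hα0.le]
      _ = r ^ (n + 1) := by
          rw [hrdef, ← Real.exp_nat_mul]
          congr 1
          push_cast [hm]
          ring
  have hsumgeo : Summable (fun n : ℕ => r ^ (n + 1)) := by
    exact (summable_geometric_of_lt_one hr0.le hr1).comp_injective (add_left_injective 1)
  have hsum : Summable (fun n : ℕ =>
      Real.exp (-4 * (1 - ε) * π ^ 2 * ((n : ℝ) + 1) ^ 2 / α) *
        Real.cosh (4 * π * ((n : ℝ) + 1) * ψ / α)) := by
    apply Summable.of_nonneg_of_le (fun n => by positivity) hterm hsumgeo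
  have hts : ∑' n : ℕ, r ^ (n + 1) = r * (1 - r)⁻¹ := by
    have : ∀ n : ℕ, r ^ (n + 1) = r * r ^ n := fun n => by ring
    simp_rw [this]
    rw [tsum_mul_left, tsum_geometric_of_lt_one hr0.le hr1]
  have h1 : ∑' n : ℕ, Real.exp (-4 * (1 - ε) * π ^ 2 * ((n : ℝ) + 1) ^ 2 / α) *
      Real.cosh (4 * π * ((n : ℝ) + 1) * ψ / α) ≤ r * (1 - r)⁻¹ := by
    rw [← hts]
    exact Summable.tsum_le_tsum hterm hsum hsumgeo
  refine h1.trans ?_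
  have hrα : r ≤ α / δ := by
    rw [hrdef, neg_div, Real.exp_neg, inv_le_iff_one_le_mul₀ (Real.exp_pos _)]
    have hx := Real.add_one_le_exp (δ / α)
    have hδα : 0 < δ / α := div_pos hδ hα0
    calc (1 : ℝ) = (δ / α) * (α / δ) := by field_simp
      _ ≤ Real.exp (δ / α) * (α / δ) := by
          apply mul_le_mul_of_nonneg_right (by linarith)
          exact (div_nonneg hα0.le hδ.le)
      _ = α / δ * Real.exp (δ / α) := mul_comm _ _
  have hαs : α ≤ Real.sqrt α := by
    nlinarith [Real.sq_sqrt hα0.le, Real.sqrt_nonneg α, Real.sqrt_le_one.2 hα1]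
  have hinv : (1 - r)⁻¹ ≤ (1 - Real.exp (-δ))⁻¹ := by
    apply inv_anti₀ hed0 (by linarith)
  have hstep : r * (1 - r)⁻¹ ≤ (Real.sqrt α / δ) * (1 - Real.exp (-δ))⁻¹ := by
    apply mul_le_mul _ hinv (inv_nonneg.2 (by linarith)) (div_nonneg (Real.sqrt_nonneg α) hδ.le)
    exact hrα.trans (by gcongr)
  refine hstep.trans (le_of_eq ?_)
  field_simp
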